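/- Let F be a field of characteristic 2 and H a quaternion algebra over F. Let S = {αj² + βj + γk : α, β, γ ∈ F} (the set of commutators of H). If y, z ∈ S are such that s₂(y,z) = yz − zy is nonzero and invertible in H, then every α ∈ H can be written as α = s₂(α·s₂(y,z)⁻¹·y, z) + s₂(z, α·s₂(y,z)⁻¹)·y. -/
import Mathlib


/-- the Waring-type identity `α = s₂(α s⁻¹ y, z) + s₂(z, α s⁻¹) y`
where `s = s₂(y,z)` is invertible, for `y, z` commutators of a characteristic-2
quaternion algebra. -/
theorem stmt_19 (F : Type*) [Field F] (hchar : ringChar F = 2)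
    (H : Type*) [Ring H] [Algebra F H]
    (i j k : H)
    (hi : ∃ t : F, i * i + i = algebraMap F H t)
    (hj : ∃ b : F, b ≠ 0 ∧ j * j = algebraMap F H b)
    (hk : k = i * j) (hij : i * j = j * (i + 1))
    (y z : H)
    (hy : ∃ α β γ : F, y = α • (j * j) + β • j + γ • k)
    (hz : ∃ α β γ : F, z = α • (j * j) + β • j + γ • k)
    (hne : y * z - z * y ≠ 0)
    (s' : H) (hs : (y * z - z * y) * s' = 1) (hs' : s' * (y * z - z * y) = 1)
    (α : H) :
    α = ((α * s' * y) * z - z * (α * s' * y)) + (z * (α * s') - (α * s') * z) * y := by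
  calc α = α * (s' * (y * z - z * y)) := by rw [hs', mul_one]
    _ = _ := by noncomm_ring
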